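/- Let N be a binary tree-child phylogenetic network, and let π = (u_0, u_1, ..., u_{s-1}) be any linear extension of the order-dual of the reachability poset on T(int N) (so u_{s-1} is the root). Then the sequence defined by N_0 = N and N_{i+1} = CR(N_i, u_i) is a well-defined cherry reduction sequence: at each step u_i is a terminal node of N_i, each N_{i+1} is again tree-child, and N_s is a single node. -/

import Mathlib

open Set

namespace Phylo

variable {V : Type*}

/-- In-degree of a node in a digraph given by its edge relation. -/
noncomputable def inDeg (N : V → V → Prop) (v : V) : ℕ := {u | N u v}.ncard

/-- Out-degree of a node. -/
noncomputable def outDeg (N : V → V → Prop) (v : V) : ℕ := {w | N v w}.ncard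

/-- Reachability: existence of a directed path. -/
def Reach (N : V → V → Prop) : V → V → Prop := Relation.ReflTransGen N

/-- Leaves: nodes of out-degree 0. -/
def leaves (N : V → V → Prop) : Set V := {v | outDeg N v = 0}

/-- Internal tree nodes, i.e. the set `T(int N)`. -/
def ITN (N : V → V → Prop) : Set V := {v | inDeg N v ≤ 1 ∧ 1 ≤ outDeg N v}

/-- A (rooted) phylogenetic network structure on the digraph `N` with root `ρ`. -/
structure IsPhyloNet (N : V → V → Prop) (ρ : V) : Prop where
  acyclic : ∀ v, ¬ Relation.TransGen N v v
  root_indeg : inDeg N ρ = 0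
  root_connects : ∀ v, Reach N ρ v
  retic_out : ∀ v, 2 ≤ inDeg N v → outDeg N v = 1
  no_elementary : ∀ v, ¬ (inDeg N v = 1 ∧ outDeg N v = 1)

/-- Binarity of a phylogenetic network. -/
structure IsBinary (N : V → V → Prop) (ρ : V) : Prop where
  retic_deg : ∀ v, 2 ≤ inDeg N v → inDeg N v = 2 ∧ outDeg N v = 1
  tree_deg : ∀ v, v ≠ ρ → inDeg N v ≤ 1 → 1 ≤ outDeg N v →
      inDeg N v = 1 ∧ outDeg N v = 2
  root_deg : outDeg N ρ = 2 ∨ outDeg N ρ = 0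

/-- Tree-child: every internal node has a child of tree type (in-degree ≤ 1). -/
def IsTreeChild (N : V → V → Prop) : Prop :=
  ∀ v, 1 ≤ outDeg N v → ∃ w, N v w ∧ inDeg N w ≤ 1

/-- `u` is the tree-node root of a cherry. -/
def IsCherryRoot (N : V → V → Prop) (u : V) : Prop :=
  inDeg N u ≤ 1 ∧ ∃ x y, x ≠ y ∧ N u x ∧ N u y ∧ outDeg N x = 0 ∧ outDeg N y = 0 ∧
    ∀ w, N u w → w = x ∨ w = y

/-- `u` is the tree-node root of a reticulated cherry. -/
def IsRetCherryRoot (N : V → V → Prop) (u : V) : Prop :=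
  inDeg N u ≤ 1 ∧ ∃ h y, h ≠ y ∧ N u h ∧ N u y ∧ 2 ≤ inDeg N h ∧ outDeg N y = 0 ∧
    (∃ x, N h x ∧ outDeg N x = 0 ∧ ∀ w, N h w → w = x) ∧
    ∀ w, N u w → w = h ∨ w = y

/-- Terminal node: root of a cherry or of a reticulated cherry. -/
def IsTerminal (N : V → V → Prop) (u : V) : Prop :=
  IsCherryRoot N u ∨ IsRetCherryRoot N u

/-- Cherry reduction rooted at `u`: remove all descendant edges of `u`
(and hence all strict descendant tree nodes of `u` become isolated/removed). -/
def CR (N : V → V → Prop) (u : V) : V → V → Prop :=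
  fun a b => N a b ∧ ¬ Reach N u a

/-- `IsCRSeq N L` : `L` is the list of reduced nodes of a full cherry reduction
sequence of `N`, ending in a single-node network (no edges left). -/
def IsCRSeq : (V → V → Prop) → List V → Prop
  | N, [] => ∀ a b, ¬ N a b
  | N, u :: us => IsTerminal N u ∧ IsCRSeq (CR N u) us

/-- Orchard networks: those admitting a full cherry reduction sequence. -/
def IsOrchard (N : V → V → Prop) : Prop := ∃ L, IsCRSeq N L

/-- Underlying undirected graph of a digraph. -/
def underlying (N : V → V → Prop) : SimpleGraph V := SimpleGraph.fromRel N

/-- Cover relation of the reachability poset on internal tree nodes. -/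
def Covers (N : V → V → Prop) (u v : V) : Prop :=
  u ∈ ITN N ∧ v ∈ ITN N ∧ u ≠ v ∧ Reach N u v ∧
    ¬ ∃ z ∈ ITN N, z ≠ u ∧ z ≠ v ∧ Reach N u z ∧ Reach N z v

/-- Biconnected set of nodes of an undirected graph. -/
def IsBiconn (G : SimpleGraph V) (B : Set V) : Prop :=
  B.Nonempty ∧ (G.induce B).Preconnected ∧ ∀ v ∈ B, (G.induce (B \ {v})).Preconnected

/-- Blob: maximal biconnected component. -/
def IsBlob (G : SimpleGraph V) (B : Set V) : Prop :=
  IsBiconn G B ∧ ∀ B', IsBiconn G B' → B ⊆ B' → B' = B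

/-- Level of a network: maximum number of reticulations in a blob. -/
noncomputable def level (N : V → V → Prop) : ℕ :=
  sSup {k | ∃ B, IsBlob (underlying N) B ∧ k = (B ∩ {v | 2 ≤ inDeg N v}).ncard}

/-- `H` is a minor of `G`, presented by branch sets. -/
def IsMinorOf {α β : Type*} (H : SimpleGraph β) (G : SimpleGraph α) : Prop :=
  ∃ f : β → Set α,
    (∀ b, (f b).Nonempty) ∧
    (∀ b, (G.induce (f b)).Preconnected) ∧
    (∀ b b', b ≠ b' → Disjoint (f b) (f b')) ∧
    (∀ b b', H.Adj b b' → ∃ x ∈ f b, ∃ y ∈ f b', G.Adj x y)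

/-- A list is a linear extension of the reachability poset on `T(int N)`. -/
def IsLinExtList (N : V → V → Prop) (L : List V) : Prop :=
  L.Nodup ∧ (∀ v, v ∈ L ↔ v ∈ ITN N) ∧
  ∀ (i j : ℕ) (hi : i < L.length) (hj : j < L.length),
    Reach N (L.get ⟨i, hi⟩) (L.get ⟨j, hj⟩) → i ≤ j

/-- A list is a linear extension of the order-dual of the reachability poset. -/
def IsDualLinExtList (N : V → V → Prop) (L : List V) : Prop :=
  L.Nodup ∧ (∀ v, v ∈ L ↔ v ∈ ITN N) ∧
  ∀ (i j : ℕ) (hi : i < L.length) (hj : j < L.length),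
    Reach N (L.get ⟨j, hj⟩) (L.get ⟨i, hi⟩) → i ≤ j

end Phylo

open Phylo

section Aux

variable {V : Type*}

/-- Nodes reachable from some element of `L`. -/
def Sset (N : V → V → Prop) (L : List V) : Set V := {a | ∃ u ∈ L, Reach N u a}

/-- Restriction of `N` to edges whose source is not reachable from `L`. -/
def Mnet (N : V → V → Prop) (L : List V) : V → V → Prop :=
  fun a b => N a b ∧ a ∉ Sset N L

lemma mem_Sset_of_reach {N : V → V → Prop} {L : List V} {a b : V}
    (ha : a ∈ Sset N L) (h : Reach N a b) : b ∈ Sset N L := by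
  obtain ⟨u, hu, hr⟩ := ha; exact ⟨u, hu, hr.trans h⟩

lemma reach_Mnet {N : V → V → Prop} {L : List V} {u a : V}
    (h : Reach N u a) : a ∉ Sset N L → Reach (Mnet N L) u a := by
  induction h with
  | refl => intro _; exact Relation.ReflTransGen.refl
  | @tail b c h1 h2 ih =>
    intro hc
    have hb : b ∉ Sset N L := fun hb =>
      hc (mem_Sset_of_reach hb (Relation.ReflTransGen.single h2))
    exact (ih hb).tail ⟨h2, hb⟩

lemma foldl_CR_eq (N : V → V → Prop) (L : List V) :
    List.foldl CR N L = Mnet N L := by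
  induction L using List.reverseRecOn with
  | nil =>
    funext a b
    simp [Mnet, Sset]
  | append_singleton T u ih =>
    rw [List.foldl_append, ih]
    funext a b
    simp only [List.foldl_cons, List.foldl_nil]
    apply propext
    constructor
    · rintro ⟨⟨hab, haS⟩, hnr⟩
      refine ⟨hab, ?_⟩
      rintro ⟨w, hw, hr⟩
      rcases List.mem_append.mp hw with h | h
      · exact haS ⟨w, h, hr⟩
      · rw [List.mem_singleton] at h; subst h
        exact hnr (reach_Mnet hr haS)
    · rintro ⟨hab, haS⟩
      have haT : a ∉ Sset N T := fun h => by
        obtain ⟨w, hw, hr⟩ := h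
        exact haS ⟨w, List.mem_append.mpr (Or.inl hw), hr⟩
      refine ⟨⟨hab, haT⟩, fun hr => haS ?_⟩
      exact ⟨u, List.mem_append.mpr (Or.inr (List.mem_singleton_self u)),
        Relation.ReflTransGen.mono (fun _ _ h => h.1) _ _ hr⟩

variable [Fintype V]

lemma outDeg_Mnet_of_mem {N : V → V → Prop} {L : List V} {a : V}
    (ha : a ∈ Sset N L) : outDeg (Mnet N L) a = 0 := by
  have : {w | Mnet N L a w} = ∅ := by
    ext w; simp only [Set.mem_setOf_eq, Set.mem_empty_iff_false, iff_false]
    rintro ⟨_, h⟩; exact h ha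
  rw [outDeg, this, Set.ncard_empty]

lemma outDeg_Mnet_of_not_mem {N : V → V → Prop} {L : List V} {a : V}
    (ha : a ∉ Sset N L) : outDeg (Mnet N L) a = outDeg N a := by
  have : {w | Mnet N L a w} = {w | N a w} := by
    ext w; simp only [Set.mem_setOf_eq, Mnet, and_iff_left_iff_imp]
    exact fun _ => ha
  rw [outDeg, this, outDeg]

lemma inDeg_Mnet_le {N : V → V → Prop} {L : List V} {b : V} :
    inDeg (Mnet N L) b ≤ inDeg N b :=
  Set.ncard_le_ncard (fun _ h => h.1) (Set.toFinite _)

lemma inDeg_Mnet_of_not_mem {N : V → V → Prop} {L : List V} {b : V}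
    (hb : b ∉ Sset N L) : inDeg (Mnet N L) b = inDeg N b := by
  have : {a | Mnet N L a b} = {a | N a b} := by
    ext a; simp only [Set.mem_setOf_eq, Mnet, and_iff_left_iff_imp]
    intro hab haS
    exact hb (mem_Sset_of_reach haS (Relation.ReflTransGen.single hab))
  rw [inDeg, this, inDeg]

lemma isTreeChild_Mnet {N : V → V → Prop} (htc : IsTreeChild N) (L : List V) :
    IsTreeChild (Mnet N L) := by
  intro v hv
  have hne : {w | Mnet N L v w}.Nonempty :=
    (Set.ncard_pos (Set.toFinite _)).mp hv
  obtain ⟨w0, hw0⟩ := hne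
  have hvS : v ∉ Sset N L := hw0.2
  have hvout : 1 ≤ outDeg N v :=
    (Set.ncard_pos (Set.toFinite _)).mpr ⟨w0, hw0.1⟩
  obtain ⟨c, hc, hcin⟩ := htc v hvout
  exact ⟨c, ⟨hc, hvS⟩, le_trans inDeg_Mnet_le hcin⟩

lemma isCRSeq_of_forall {N : V → V → Prop} {L : List V}
    (h1 : ∀ k (hk : k < L.length),
      IsTerminal (List.foldl CR N (L.take k)) (L.get ⟨k, hk⟩))
    (h2 : ∀ a b, ¬ List.foldl CR N L a b) : IsCRSeq N L := by
  induction L generalizing N with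
  | nil => exact h2
  | cons u us ih =>
    refine ⟨?_, ih ?_ ?_⟩
    · have := h1 0 (by simp)
      simpa using this
    · intro k hk
      have := h1 (k + 1) (by simpa using Nat.succ_lt_succ hk)
      simpa using this
    · intro a b
      exact h2 a b

end Aux

/-- any linear extension of the order-dual of the reachability
poset on `T(int N)` of a binary tree-child network yields a valid cherry
reduction sequence, all whose intermediate networks are again tree-child. -/
theorem stmt6 {V : Type*} [Fintype V] (N : V → V → Prop) (ρ : V)
    (hphy : IsPhyloNet N ρ) (hbin : IsBinary N ρ) (htc : IsTreeChild N)
    (L : List V) (hL : IsDualLinExtList N L) :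
    IsCRSeq N L ∧ ∀ n : ℕ, IsTreeChild (List.foldl CR N (L.take n)) := by
  obtain ⟨hnd, hmem, hord⟩ := hL
  -- the key step: each `L.get k` is terminal in the `k`-th reduced network
  have key : ∀ k (hk : k < L.length),
      IsTerminal (Mnet N (L.take k)) (L.get ⟨k, hk⟩) := by
    intro k hk
    set u := L.get ⟨k, hk⟩ with hu_def
    set T := L.take k with hT_def
    -- u is an internal tree node
    have huITN : u ∈ ITN N := (hmem u).mp (List.get_mem L ⟨k, hk⟩)
    obtain ⟨hu1, hu2⟩ := huITN
    -- internal tree nodes strictly below u lie in the prefix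
    have hmemtake : ∀ {v : V}, v ∈ ITN N → Relation.TransGen N u v →
        v ∈ Sset N T := by
      intro v hv htg
      have hvL : v ∈ L := (hmem v).mpr hv
      obtain ⟨⟨j, hj⟩, hjv⟩ := List.mem_iff_get.mp hvL
      have hr : Reach N (L.get ⟨k, hk⟩) (L.get ⟨j, hj⟩) := by
        rw [hjv]; exact htg.to_reflTransGen
      have hjk : j ≤ k := hord j k hj hk hr
      have hne : j ≠ k := by
        rintro rfl
        have : v = u := by rw [← hjv]
        exact hphy.acyclic u (this ▸ htg)
      have hjk' : j < k := lt_of_le_of_ne hjk hne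
      refine ⟨v, ?_, Relation.ReflTransGen.refl⟩
      rw [hT_def]
      rw [← hjv]
      have hjlen : j < (L.take k).length := by
        rw [List.length_take]; exact lt_min hjk' hj
      have : (L.take k).get ⟨j, hjlen⟩ = L.get ⟨j, hj⟩ := by
        simp [List.getElem_take]
      rw [← this]
      exact List.get_mem _ _
    -- u itself is not reachable from the prefix
    have huS : u ∉ Sset N T := by
      rintro ⟨w, hw, hr⟩
      rw [hT_def] at hw
      obtain ⟨⟨i, hi⟩, hiw⟩ := List.mem_iff_get.mp hw
      have hilen : i < L.length := lt_of_lt_of_le hi (by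
        rw [List.length_take] at hi ⊢; omega)
      have hieq : L.get ⟨i, hilen⟩ = w := by
        rw [← hiw]; simp [List.getElem_take]
      have hik : i < k := by
        have := hi; rw [List.length_take] at this; omega
      have : k ≤ i := hord k i hk hilen (by rw [hieq]; exact hr)
      omega
    -- u has exactly two children
    have houtu : outDeg N u = 2 := by
      by_cases hur : u = ρ
      · rcases hbin.root_deg with h | h
        · rw [← hur] at h; exact h
        · rw [← hur] at h; omega
      · exact (hbin.tree_deg u hur hu1 hu2).2
    obtain ⟨x, y, hxy, hset⟩ := Set.ncard_eq_two.mp houtu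
    have hNux : N u x := by
      have : x ∈ {w | N u w} := by rw [hset]; exact Set.mem_insert x {y}
      exact this
    have hNuy : N u y := by
      have : y ∈ {w | N u w} := by
        rw [hset]; exact Set.mem_insert_of_mem x rfl
      exact this
    have hchmem : ∀ w, N u w → w = x ∨ w = y := by
      intro w hw
      have : w ∈ ({x, y} : Set V) := by rw [← hset]; exact hw
      simpa using this
    -- strict descendants of u of tree type become leaves after reduction
    have hleafM : ∀ w, inDeg N w ≤ 1 → Relation.TransGen N u w →
        outDeg (Mnet N T) w = 0 := by
      intro w hw htg
      rcases Nat.eq_zero_or_pos (outDeg N w) with h0 | hpos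
      · by_cases hwS : w ∈ Sset N T
        · exact outDeg_Mnet_of_mem hwS
        · rw [outDeg_Mnet_of_not_mem hwS]; exact h0
      · exact outDeg_Mnet_of_mem (hmemtake ⟨hw, hpos⟩ htg)
    have hclass : ∀ w, N u w →
        outDeg (Mnet N T) w = 0 ∨ (2 ≤ inDeg N w ∧ w ∉ Sset N T) := by
      intro w hw
      rcases le_or_gt (inDeg N w) 1 with h1 | h2
      · exact Or.inl (hleafM w h1 (Relation.TransGen.single hw))
      · by_cases hwS : w ∈ Sset N T
        · exact Or.inl (outDeg_Mnet_of_mem hwS)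
        · exact Or.inr ⟨h2, hwS⟩
    -- builder for the reticulated cherry case
    have buildRet : ∀ h' y', N u h' → N u y' → h' ≠ y' →
        2 ≤ inDeg N h' → h' ∉ Sset N T → outDeg (Mnet N T) y' = 0 →
        (∀ w, N u w → w = h' ∨ w = y') → IsRetCherryRoot (Mnet N T) u := by
      intro h' y' hNuh hNuy' hne hind hhS hyl hch
      have hout1 : outDeg N h' = 1 := hphy.retic_out h' hind
      obtain ⟨c, hcset⟩ := Set.ncard_eq_one.mp hout1
      have hNhc : N h' c := by
        have : c ∈ {w | N h' w} := by rw [hcset]; exact rfl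
        exact this
      have hcin : inDeg N c ≤ 1 := by
        obtain ⟨c', hc', hin⟩ := htc h' (by omega)
        have : c' ∈ {w | N h' w} := hc'
        rw [hcset, Set.mem_singleton_iff] at this
        rwa [this] at hin
      have hcleaf : outDeg (Mnet N T) c = 0 :=
        hleafM c hcin ((Relation.TransGen.single hNuh).tail hNhc)
      refine ⟨le_trans inDeg_Mnet_le hu1, h', y', hne, ⟨hNuh, huS⟩, ⟨hNuy', huS⟩,
        ?_, hyl, ⟨c, ⟨hNhc, hhS⟩, hcleaf, ?_⟩, fun w hw => hch w hw.1⟩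
      · rw [inDeg_Mnet_of_not_mem hhS]; exact hind
      · intro w hw
        have : w ∈ {w | N h' w} := hw.1
        rwa [hcset, Set.mem_singleton_iff] at this
    -- tree-child forces at most one "live" reticulation child
    obtain ⟨c0, hc0, hc0in⟩ := htc u hu2
    rcases hclass x hNux with hx | hx <;> rcases hclass y hNuy with hy | hy
    · exact Or.inl ⟨le_trans inDeg_Mnet_le hu1, x, y, hxy, ⟨hNux, huS⟩,
        ⟨hNuy, huS⟩, hx, hy, fun w hw => hchmem w hw.1⟩
    · exact Or.inr (buildRet y x hNuy hNux hxy.symm hy.1 hy.2 hx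
        (fun w hw => (hchmem w hw).symm))
    · exact Or.inr (buildRet x y hNux hNuy hxy hx.1 hx.2 hy hchmem)
    · rcases hchmem c0 hc0 with rfl | rfl
      · have := hx.1; omega
      · have := hy.1; omega
  -- after reducing all of L, no edges remain
  have final : ∀ a b, ¬ Mnet N L a b := by
    rintro a b ⟨hab, haS⟩
    apply haS
    have hout : 1 ≤ outDeg N a :=
      (Set.ncard_pos (Set.toFinite _)).mpr ⟨b, hab⟩
    rcases le_or_gt (inDeg N a) 1 with h1 | h2
    · exact ⟨a, (hmem a).mpr ⟨h1, hout⟩, Relation.ReflTransGen.refl⟩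
    · have hra : Reach N ρ a := hphy.root_connects a
      have hane : a ≠ ρ := by
        rintro rfl
        rw [hphy.root_indeg] at h2; omega
      have hρout : 1 ≤ outDeg N ρ := by
        rcases Relation.ReflTransGen.cases_head hra with heq | ⟨c, hc, _⟩
        · exact absurd heq.symm hane
        · exact (Set.ncard_pos (Set.toFinite _)).mpr ⟨c, hc⟩
      refine ⟨ρ, (hmem ρ).mpr ⟨?_, hρout⟩, hra⟩
      rw [hphy.root_indeg]; omega
  constructor
  · apply isCRSeq_of_forall
    · intro k hk
      rw [foldl_CR_eq]
      exact key k hk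
    · intro a b
      rw [foldl_CR_eq]
      exact final a b
  · intro n
    rw [foldl_CR_eq]
    exact isTreeChild_Mnet htc _
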